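/- Let k, m be positive integers with gcd(k, m) = 1, let q = 2^k, and let α ∈ F_{2^m} be such that x^{q+1} + x + α has no root in F_{2^m}. Then the map y ↦ α^q·y^{q²} + y^q + α·y is a permutation of F_{2^m}. -/
import Mathlib


/-- If gcd(k,m) = 1, q = 2^k and x^{q+1} + x + α has no root in F_{2^m},
then y ↦ α^q·y^{q²} + y^q + α·y is a permutation of F_{2^m}. -/
theorem stmt_5 (k m : ℕ) (hk : 0 < k) (hm : 0 < m) (hgcd : Nat.gcd k m = 1)
    (K : Type*) [Field K] [Fintype K] [CharP K 2] (hcard : Fintype.card K = 2 ^ m)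
    (q : ℕ) (hq : q = 2 ^ k) (α : K)
    (hα : ∀ x : K, x ^ (q + 1) + x + α ≠ 0) :
    Function.Bijective (fun y : K => α ^ q * y ^ (q ^ 2) + y ^ q + α * y) := by
  have hq1 : 1 ≤ q := by subst hq; exact Nat.one_le_two_pow
  -- Frobenius-type additivity
  have frobq : ∀ a b : K, (a + b) ^ q = a ^ q + b ^ q := by
    intro a b; subst hq; exact add_pow_char_pow a b 2 k
  have frobq2 : ∀ a b : K, (a + b) ^ (q ^ 2) = a ^ (q ^ 2) + b ^ (q ^ 2) := by
    intro a b
    have h : q ^ 2 = 2 ^ (k * 2) := by subst hq; rw [pow_mul]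
    rw [h]; exact add_pow_char_pow a b 2 (k * 2)
  -- kernel trivial
  have key : ∀ y : K, α ^ q * y ^ (q ^ 2) + y ^ q + α * y = 0 → y = 0 := by
    intro y hy
    by_contra hy0
    set t := y ^ (q - 1) with ht
    have e1 : q = (q - 1) + 1 := by omega
    have e2 : q ^ 2 = (q - 1) * (q + 1) + 1 := by
      obtain ⟨n, rfl⟩ : ∃ n, q = n + 1 := ⟨q - 1, by omega⟩
      simp; ring
    have hyq : y ^ q = t * y := by rw [ht, ← pow_succ, ← e1]
    have hyq2 : y ^ (q ^ 2) = t ^ (q + 1) * y := by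
      rw [ht, ← pow_mul, ← pow_succ, ← e2]
    have E : α ^ q * t ^ (q + 1) + t + α = 0 := by
      have : (α ^ q * t ^ (q + 1) + t + α) * y = 0 := by
        rw [← hy, hyq, hyq2]; ring
      rcases mul_eq_zero.mp this with h | h
      · exact h
      · exact absurd h hy0
    -- equation for α * t
    have E2 : (α * t) ^ (q + 1) + (α * t) + α ^ 2 = 0 := by
      have : (α * t) ^ (q + 1) + (α * t) + α ^ 2 =
          α * (α ^ q * t ^ (q + 1) + t + α) := by
        rw [mul_pow, pow_succ α q]; ring
      rw [this, E, mul_zero]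
    -- square root
    obtain ⟨w, hw⟩ : ∃ w : K, w ^ 2 = α * t := by
      have hsurj : Function.Surjective (frobenius K 2) :=
        Finite.injective_iff_surjective.mp (frobenius K 2).injective
      obtain ⟨w, hw⟩ := hsurj (α * t)
      exact ⟨w, hw⟩
    apply hα w
    have hsq : (w ^ (q + 1) + w + α) ^ 2 = 0 := by
      have h1 : ∀ a b : K, (a + b) ^ 2 = a ^ 2 + b ^ 2 := fun a b => add_pow_char a b 2
      rw [h1, h1, ← pow_mul, mul_comm (q+1) 2, pow_mul, hw]
      exact E2
    exact pow_eq_zero_iff (by norm_num) |>.mp hsq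
  -- injectivity implies bijectivity
  apply Finite.injective_iff_bijective.mp
  intro a b hab
  simp only at hab
  have h0 : α ^ q * (a + b) ^ (q ^ 2) + (a + b) ^ q + α * (a + b) = 0 := by
    rw [frobq, frobq2, mul_add, mul_add]
    have : α ^ q * a ^ q ^ 2 + α ^ q * b ^ q ^ 2 + (a ^ q + b ^ q) + (α * a + α * b)
        = (α ^ q * a ^ q ^ 2 + a ^ q + α * a) + (α ^ q * b ^ q ^ 2 + b ^ q + α * b) := by
      ring
    rw [this, hab, ← two_mul]
    simp [CharTwo.two_eq_zero]
  have := key _ h0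
  rw [add_eq_zero_iff_eq_neg, CharTwo.neg_eq] at this; exact this
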